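/- Let Π_{j-1}(θ) = e^{-β_{j-1}E(θ)}/Z_{j-1} and Π_j(θ) = e^{-β_j E(θ)}/Z_j on a bounded Θ with osc(E) < ∞. Then for every z ∈ Θ, |Π_{j-1}(z)/Π_j(z) − 1| ≤ |β_j − β_{j-1}| · osc(E) · exp(|β_j − β_{j-1}| · osc(E)). -/

import Mathlib

open MeasureTheory

lemma abs_exp_sub_one_le' (t : ℝ) : |Real.exp t - 1| ≤ |t| * Real.exp |t| := by
  rcases le_or_gt 0 t with ht | ht
  · rw [abs_of_nonneg ht,
      abs_of_nonneg (by linarith [Real.one_le_exp ht] : (0:ℝ) ≤ Real.exp t - 1)]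
    have h1 : 1 - t ≤ Real.exp (-t) := by linarith [Real.add_one_le_exp (-t)]
    have h2 : Real.exp t * Real.exp (-t) = 1 := by rw [← Real.exp_add]; simp
    nlinarith [Real.exp_pos t]
  · have h1 : Real.exp t < 1 := Real.exp_lt_one_iff.mpr ht
    rw [abs_of_neg ht, abs_of_nonpos (by linarith : Real.exp t - 1 ≤ 0)]
    have h2 : t + 1 ≤ Real.exp t := Real.add_one_le_exp t
    have h3 : 1 ≤ Real.exp (-t) := Real.one_le_exp (by linarith)
    nlinarith

/- STATEMENT 13: On a bounded `Θ ⊆ ℝ^p` with `osc(E) = max_{x,y∈Θ}|E(x) − E(y)| < ∞`, for the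
tempered densities `Π_b(θ) = e^{-bE(θ)}/Z(b)` at inverse temperatures `β_{j-1}, β_j ∈ (0,1]`,
one has, for every `z ∈ Θ`,
`|Π_{j-1}(z)/Π_j(z) − 1| ≤ |β_j − β_{j-1}| · osc(E) · exp(|β_j − β_{j-1}| · osc(E))`. -/
theorem tempered_density_ratio_bound
    {p : ℕ} (Θ : Set (Fin p → ℝ)) (hΘmeas : MeasurableSet Θ)
    (hΘbdd : Bornology.IsBounded Θ) (hΘpos : 0 < volume Θ)
    (E : (Fin p → ℝ) → ℝ) (hEmeas : Measurable E)
    (oscE : ℝ) (hoscE : oscE = sSup {v : ℝ | ∃ x ∈ Θ, ∃ y ∈ Θ, v = |E x - E y|})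
    (hbdd : BddAbove {v : ℝ | ∃ x ∈ Θ, ∃ y ∈ Θ, v = |E x - E y|})
    (βprev βcur : ℝ) (hβprev : βprev ∈ Set.Ioc (0:ℝ) 1) (hβcur : βcur ∈ Set.Ioc (0:ℝ) 1)
    (Z : ℝ → ℝ) (hZ : ∀ b : ℝ, Z b = ∫ θ in Θ, Real.exp (-(b * E θ)))
    (z : Fin p → ℝ) (hz : z ∈ Θ) :
    |(Real.exp (-(βprev * E z)) / Z βprev) / (Real.exp (-(βcur * E z)) / Z βcur) - 1| ≤
      |βcur - βprev| * oscE * Real.exp (|βcur - βprev| * oscE) := by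
  obtain ⟨hβp0, _⟩ := hβprev
  obtain ⟨hβc0, _⟩ := hβcur
  set δ : ℝ := βcur - βprev with hδ
  have hΘfin : volume Θ ≠ ⊤ := hΘbdd.measure_lt_top.ne
  -- oscillation bounds
  have hosc_mem : ∀ x ∈ Θ, |E x - E z| ≤ oscE := fun x hx =>
    hoscE ▸ le_csSup hbdd ⟨x, hx, z, hz, rfl⟩
  have hosc_nonneg : 0 ≤ oscE := by
    have := hosc_mem z hz
    simp at this
    calc (0:ℝ) = |E z - E z| := by simp
    _ ≤ oscE := hosc_mem z hz
  -- integrability of the Boltzmann weights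
  have hInt : ∀ b : ℝ, IntegrableOn (fun θ => Real.exp (-(b * E θ))) Θ volume := by
    intro b
    refine Measure.integrableOn_of_bounded hΘfin
      ((Real.measurable_exp.comp ((hEmeas.const_mul b).neg)).aestronglyMeasurable)
      (M := Real.exp (|b| * (|E z| + oscE))) ?_
    filter_upwards [ae_restrict_mem hΘmeas] with θ hθ
    have hEθ : |E θ| ≤ |E z| + oscE := by
      have := hosc_mem θ hθ
      calc |E θ| = |E z + (E θ - E z)| := by ring_nf
      _ ≤ |E z| + |E θ - E z| := abs_add_le _ _
      _ ≤ |E z| + oscE := by linarith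
    have : -(b * E θ) ≤ |b| * (|E z| + oscE) := by
      calc -(b * E θ) ≤ |b * E θ| := neg_le_abs _
      _ = |b| * |E θ| := abs_mul _ _
      _ ≤ |b| * (|E z| + oscE) := by
          exact mul_le_mul_of_nonneg_left hEθ (abs_nonneg b)
    simpa [Real.norm_eq_abs, abs_of_pos (Real.exp_pos _)] using Real.exp_le_exp.mpr this
  -- positivity of Z
  have hZpos : ∀ b : ℝ, 0 < Z b := by
    intro b
    have hc : (0:ℝ) < Real.exp (-(|b| * (|E z| + oscE))) := Real.exp_pos _
    have hlb : ∀ x ∈ Θ, Real.exp (-(|b| * (|E z| + oscE))) ≤ Real.exp (-(b * E x)) := by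
      intro x hx
      apply Real.exp_le_exp.mpr
      have hEx : |E x| ≤ |E z| + oscE := by
        have := hosc_mem x hx
        calc |E x| = |E z + (E x - E z)| := by ring_nf
        _ ≤ |E z| + |E x - E z| := abs_add_le _ _
        _ ≤ |E z| + oscE := by linarith
      have : b * E x ≤ |b * E x| := le_abs_self _
      rw [abs_mul] at this
      nlinarith [mul_le_mul_of_nonneg_left hEx (abs_nonneg b)]
    have := setIntegral_ge_of_const_le hΘmeas hΘfin hlb (hInt b)
    have hvol : 0 < (volume Θ).toReal := ENNReal.toReal_pos hΘpos.ne' hΘfin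
    rw [hZ b]
    calc (0:ℝ) < Real.exp (-(|b| * (|E z| + oscE))) * (volume Θ).toReal := by positivity
    _ ≤ _ := by rw [smul_eq_mul, mul_comm] at this; exact this
  set M : ℝ := |βcur - βprev| * oscE with hM
  have hM0 : 0 ≤ M := mul_nonneg (abs_nonneg _) hosc_nonneg
  -- the key integrand
  set g : (Fin p → ℝ) → ℝ :=
    fun θ => Real.exp (δ * E z) * Real.exp (-(βcur * E θ)) - Real.exp (-(βprev * E θ)) with hg
  have hIntg : IntegrableOn g Θ volume :=
    (((hInt βcur).const_mul _).sub (hInt βprev))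
  have hIg : ∫ θ in Θ, g θ = Real.exp (δ * E z) * Z βcur - Z βprev := by
    rw [hg, integral_sub ((hInt βcur).const_mul _) (hInt βprev), integral_const_mul,
      hZ βcur, hZ βprev]
  -- pointwise factorisation of g
  have hgfact : ∀ θ, g θ = (Real.exp (δ * (E z - E θ)) - 1) * Real.exp (-(βprev * E θ)) := by
    intro θ
    rw [hg]
    have h1 : δ * (E z - E θ) + -(βprev * E θ) = δ * E z + -(βcur * E θ) := by
      rw [hδ]; ring
    simp only [sub_mul, one_mul, ← Real.exp_add, h1]
  -- pointwise bound on g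
  have hgbound : ∀ θ ∈ Θ, |g θ| ≤ M * Real.exp M * Real.exp (-(βprev * E θ)) := by
    intro θ hθ
    rw [hgfact θ, abs_mul, abs_of_pos (Real.exp_pos _)]
    have ht : |δ * (E z - E θ)| ≤ M := by
      rw [abs_mul, hM, hδ]
      have := hosc_mem θ hθ
      have h' : |E z - E θ| ≤ oscE := by rwa [abs_sub_comm]
      exact mul_le_mul_of_nonneg_left h' (abs_nonneg _)
    have h1 : |Real.exp (δ * (E z - E θ)) - 1| ≤ M * Real.exp M := by
      calc |Real.exp (δ * (E z - E θ)) - 1|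
          ≤ |δ * (E z - E θ)| * Real.exp |δ * (E z - E θ)| := abs_exp_sub_one_le' _
      _ ≤ M * Real.exp M := by
          exact mul_le_mul ht (Real.exp_le_exp.mpr ht) (Real.exp_pos _).le hM0
    exact mul_le_mul_of_nonneg_right h1 (Real.exp_pos _).le
  -- rewrite the LHS as |∫ g| / Z βprev
  have hZp := hZpos βprev
  have hZc := hZpos βcur
  have hB : Real.exp (-(βcur * E z)) ≠ 0 := (Real.exp_pos _).ne'
  have hexpA : Real.exp (-(βprev * E z)) = Real.exp (δ * E z) * Real.exp (-(βcur * E z)) := by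
    rw [← Real.exp_add]; congr 1; rw [hδ]; ring
  have hLHS : (Real.exp (-(βprev * E z)) / Z βprev) / (Real.exp (-(βcur * E z)) / Z βcur) - 1
      = (∫ θ in Θ, g θ) / Z βprev := by
    rw [hexpA, hIg]
    field_simp
  rw [hLHS, abs_div, abs_of_pos hZp, div_le_iff₀ hZp]
  calc |∫ θ in Θ, g θ| ≤ ∫ θ in Θ, |g θ| := by simpa [Real.norm_eq_abs] using norm_integral_le_integral_norm (μ := volume.restrict Θ) g
  _ ≤ ∫ θ in Θ, M * Real.exp M * Real.exp (-(βprev * E θ)) := by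
      exact setIntegral_mono_on hIntg.abs ((hInt βprev).const_mul _) hΘmeas hgbound
  _ = M * Real.exp M * Z βprev := by rw [integral_const_mul, hZ βprev]
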